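/- For every lower semicontinuous submeasure ψ on P(ℕ) there exists a lower semicontinuous submeasure π on P(ℕ) such that Exh(π) = Exh(ψ) and, for every finite set F ⊆ ℕ, the value π(F) is either a rational number or ∞. -/

import Mathlib

open scoped ENNReal

/-- A submeasure on `P(ℕ)`. -/
def IsSubmeasure (φ : Set ℕ → ℝ≥0∞) : Prop :=
  φ ∅ = 0 ∧ (∀ X Y : Set ℕ, X ⊆ Y → φ X ≤ φ Y) ∧ ∀ X Y : Set ℕ, φ (X ∪ Y) ≤ φ X + φ Y

/-- Lower semicontinuity: `φ(X) = lim_n φ(X ∩ {0,…,n-1})`. -/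
def IsLSCSubmeasure (φ : Set ℕ → ℝ≥0∞) : Prop :=
  ∀ X : Set ℕ, Filter.Tendsto (fun n => φ (X ∩ {k | k < n})) Filter.atTop (nhds (φ X))

/-- The exhaustive ideal of a submeasure. -/
def Exh (φ : Set ℕ → ℝ≥0∞) : Set (Set ℕ) :=
  {X | ∀ ε : ℝ≥0∞, 0 < ε → ∃ F : Finset ℕ, φ (X \ (F : Set ℕ)) < ε}

open scoped NNReal
open Finset Filter

noncomputable section

/-- "rational or top" predicate -/
def Srat (x : ℝ≥0∞) : Prop := (∃ q : ℚ, x = ENNReal.ofReal (q : ℝ)) ∨ x = ⊤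

lemma ofReal_rat_max (q : ℚ) :
    ENNReal.ofReal (q : ℝ) = ENNReal.ofReal ((max q 0 : ℚ) : ℝ) := by
  rcases le_total q 0 with h | h
  · rw [max_eq_right h]
    simp [ENNReal.ofReal_eq_zero.2 (by exact_mod_cast h : ((q:ℝ) ≤ 0))]
  · rw [max_eq_left h]

lemma Srat_zero : Srat 0 := Or.inl ⟨0, by simp⟩

lemma Srat_add {a b : ℝ≥0∞} (ha : Srat a) (hb : Srat b) : Srat (a + b) := by
  rcases ha with ⟨q1, rfl⟩ | rfl
  · rcases hb with ⟨q2, rfl⟩ | rfl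
    · refine Or.inl ⟨max q1 0 + max q2 0, ?_⟩
      rw [ofReal_rat_max q1, ofReal_rat_max q2,
        ← ENNReal.ofReal_add (by exact_mod_cast le_max_right q1 0)
          (by exact_mod_cast le_max_right q2 0)]
      norm_cast
    · exact Or.inr (by simp)
  · exact Or.inr (by simp)

lemma Srat_sum {α : Type*} (s : Finset α) (f : α → ℝ≥0∞) (h : ∀ a ∈ s, Srat (f a)) :
    Srat (∑ a ∈ s, f a) := by
  induction s using Finset.cons_induction with
  | empty => simpa using Srat_zero
  | cons a s ha ih =>
    rw [Finset.sum_cons]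
    exact Srat_add (h a (Finset.mem_cons_self a s))
      (ih fun b hb => h b (Finset.mem_cons_of_mem hb))

/-- round up to a power of two -/
def rnd (x : ℝ≥0∞) : ℝ≥0∞ :=
  if x = 0 then 0 else if x = ⊤ then ⊤
  else (((2:ℝ≥0) ^ (Int.clog 2 x.toNNReal) : ℝ≥0) : ℝ≥0∞)

lemma le_rnd (x : ℝ≥0∞) : x ≤ rnd x := by
  unfold rnd
  split_ifs with h0 ht
  · simp [h0]
  · simp [ht]
  · conv_lhs => rw [← ENNReal.coe_toNNReal ht]
    exact_mod_cast Int.self_le_zpow_clog (R := ℝ≥0) one_lt_two x.toNNReal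

lemma rnd_le (x : ℝ≥0∞) : rnd x ≤ 2 * x := by
  unfold rnd
  split_ifs with h0 ht
  · simp
  · simp [ht]
  · have hx : (0:ℝ≥0) < x.toNNReal := ENNReal.toNNReal_pos h0 ht
    have h1 : ((2:ℝ≥0)) ^ (Int.clog 2 x.toNNReal - 1) < x.toNNReal := by
      exact_mod_cast Int.zpow_pred_clog_lt_self (R := ℝ≥0) one_lt_two hx
    have h2 : ((2:ℝ≥0)) ^ (Int.clog 2 x.toNNReal) ≤ 2 * x.toNNReal := by
      have := mul_le_mul_of_nonneg_left h1.le (by norm_num : (0:ℝ≥0) ≤ 2)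
      calc (2:ℝ≥0) ^ (Int.clog 2 x.toNNReal)
          = 2 * 2 ^ (Int.clog 2 x.toNNReal - 1) := by
            rw [show Int.clog 2 x.toNNReal = Int.clog 2 x.toNNReal - 1 + 1 by omega,
              zpow_add_one₀ (by norm_num : (2:ℝ≥0) ≠ 0)]
            ring_nf
        _ ≤ 2 * x.toNNReal := this
    calc (((2:ℝ≥0) ^ (Int.clog 2 x.toNNReal) : ℝ≥0) : ℝ≥0∞)
        ≤ ((2 * x.toNNReal : ℝ≥0) : ℝ≥0∞) := by exact_mod_cast h2
      _ = 2 * x := by rw [ENNReal.coe_mul, ENNReal.coe_toNNReal ht]; norm_num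

lemma rnd_mono : Monotone rnd := by
  intro x y hxy
  rcases eq_or_ne x 0 with rfl | hx0
  · simp [rnd]
  rcases eq_or_ne y ⊤ with rfl | hyt
  · simp [rnd]
  have hy0 : y ≠ 0 := fun h => hx0 (le_antisymm (h ▸ hxy) zero_le)
  have hxt : x ≠ ⊤ := fun h => hyt (top_le_iff.1 (h ▸ hxy))
  unfold rnd
  rw [if_neg hx0, if_neg hxt, if_neg hy0, if_neg hyt]
  have hmono := Int.clog_mono_right (b := 2)
    (ENNReal.toNNReal_pos hx0 hxt) (ENNReal.toNNReal_mono hyt hxy)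
  exact ENNReal.coe_le_coe.2 (zpow_le_zpow_right₀ (by norm_num : (1:ℝ≥0) ≤ 2) hmono)

lemma Srat_rnd (x : ℝ≥0∞) : Srat (rnd x) := by
  unfold rnd
  split_ifs with h0 ht
  · exact Srat_zero
  · exact Or.inr rfl
  · refine Or.inl ⟨(2:ℚ) ^ (Int.clog 2 x.toNNReal), ?_⟩
    rw [show (((2:ℚ) ^ (Int.clog 2 x.toNNReal) : ℚ) : ℝ)
        = (((2:ℝ≥0) ^ (Int.clog 2 x.toNNReal) : ℝ≥0) : ℝ) by push_cast; ring]
    rw [ENNReal.ofReal_coe_nnreal]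

section Cover
variable (ψ : Set ℕ → ℝ≥0∞)

/-- cost of a finite cover -/
def rcost (C : Finset (Finset ℕ)) : ℝ≥0∞ := ∑ G ∈ C, rnd (ψ (G : Set ℕ))

/-- the finite covers of `F` by subsets of `F` -/
def rcovers (F : Finset ℕ) : Finset (Finset (Finset ℕ)) :=
  F.powerset.powerset.filter (fun C => F ⊆ C.sup id)

lemma self_mem_rcovers (F : Finset ℕ) : {F} ∈ rcovers F := by
  simp [rcovers, Finset.mem_filter, Finset.mem_powerset]

lemma rcovers_nonempty (F : Finset ℕ) : (rcovers F).Nonempty := ⟨{F}, self_mem_rcovers F⟩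

/-- the rationalized submeasure on finite sets -/
def rr (F : Finset ℕ) : ℝ≥0∞ := (rcovers F).inf (rcost ψ)

lemma rr_le_rnd (F : Finset ℕ) : rr ψ F ≤ rnd (ψ (F : Set ℕ)) := by
  refine (Finset.inf_le (self_mem_rcovers F)).trans_eq ?_
  simp [rcost]

lemma sum_image_le' {α β : Type*} [DecidableEq β] (s : Finset α) (g : α → β)
    (f : β → ℝ≥0∞) : ∑ b ∈ s.image g, f b ≤ ∑ a ∈ s, f (g a) := by
  classical
  induction s using Finset.cons_induction with
  | empty => simp
  | cons a s ha ih =>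
    rw [Finset.cons_eq_insert, Finset.image_insert, Finset.sum_insert ha]
    by_cases hg : g a ∈ s.image g
    · rw [Finset.insert_eq_self.2 hg]
      exact ih.trans (self_le_add_left _ _)
    · rw [Finset.sum_insert hg]
      exact add_le_add_right ih _

lemma psi_sup_le (hψ : IsSubmeasure ψ) (C : Finset (Finset ℕ)) :
    ψ ((C.sup id : Finset ℕ) : Set ℕ) ≤ ∑ G ∈ C, ψ (G : Set ℕ) := by
  induction C using Finset.cons_induction with
  | empty => simp [hψ.1]
  | cons a s ha ih =>
    rw [Finset.sup_cons, Finset.sum_cons]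
    have : ((id a ⊔ s.sup id : Finset ℕ) : Set ℕ) = (a : Set ℕ) ∪ ((s.sup id : Finset ℕ) : Set ℕ) := by
      rw [Finset.sup_eq_union, Finset.coe_union]; rfl
    rw [this]
    exact (hψ.2.2 _ _).trans (add_le_add_right ih _)

lemma le_rr (hψ : IsSubmeasure ψ) (F : Finset ℕ) : ψ (F : Set ℕ) ≤ rr ψ F := by
  refine Finset.le_inf fun C hC => ?_
  rw [rcovers, Finset.mem_filter] at hC
  calc ψ (F : Set ℕ) ≤ ψ ((C.sup id : Finset ℕ) : Set ℕ) :=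
        hψ.2.1 _ _ (Finset.coe_subset.2 hC.2)
    _ ≤ ∑ G ∈ C, ψ (G : Set ℕ) := psi_sup_le ψ hψ C
    _ ≤ rcost ψ C := Finset.sum_le_sum fun G _ => le_rnd _

lemma rr_mono (hψ : IsSubmeasure ψ) {F F' : Finset ℕ} (h : F ⊆ F') :
    rr ψ F ≤ rr ψ F' := by
  refine Finset.le_inf fun C hC => ?_
  rw [rcovers, Finset.mem_filter, Finset.mem_powerset] at hC
  classical
  have hmem : C.image (· ∩ F) ∈ rcovers F := by
    rw [rcovers, Finset.mem_filter, Finset.mem_powerset]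
    constructor
    · intro G hG
      rw [Finset.mem_image] at hG
      obtain ⟨G', _, rfl⟩ := hG
      exact Finset.mem_powerset.2 Finset.inter_subset_right
    · intro x hx
      have hx' : x ∈ C.sup id := hC.2 (h hx)
      rw [Finset.mem_sup] at hx'
      obtain ⟨G, hG, hxG⟩ := hx'
      rw [Finset.mem_sup]
      exact ⟨G ∩ F, Finset.mem_image_of_mem _ hG, Finset.mem_inter.2 ⟨hxG, hx⟩⟩
  calc rr ψ F ≤ rcost ψ (C.image (· ∩ F)) := Finset.inf_le hmem
    _ ≤ ∑ G ∈ C, rnd (ψ ((G ∩ F : Finset ℕ) : Set ℕ)) := sum_image_le' _ _ _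
    _ ≤ ∑ G ∈ C, rnd (ψ (G : Set ℕ)) := Finset.sum_le_sum fun G _ =>
        rnd_mono (hψ.2.1 _ _ (by exact_mod_cast Finset.inter_subset_left))
    _ = rcost ψ C := rfl

lemma rr_subadd (F G : Finset ℕ) : rr ψ (F ∪ G) ≤ rr ψ F + rr ψ G := by
  classical
  obtain ⟨C1, hC1, hval1⟩ := Finset.exists_mem_eq_inf (rcovers F) (rcovers_nonempty F) (rcost ψ)
  obtain ⟨C2, hC2, hval2⟩ := Finset.exists_mem_eq_inf (rcovers G) (rcovers_nonempty G) (rcost ψ)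
  rw [rcovers, Finset.mem_filter, Finset.mem_powerset] at hC1 hC2
  have hmem : C1 ∪ C2 ∈ rcovers (F ∪ G) := by
    rw [rcovers, Finset.mem_filter, Finset.mem_powerset]
    constructor
    · intro H hH
      rcases Finset.mem_union.1 hH with h | h
      · exact Finset.mem_powerset.2 ((Finset.mem_powerset.1 (hC1.1 h)).trans
          Finset.subset_union_left)
      · exact Finset.mem_powerset.2 ((Finset.mem_powerset.1 (hC2.1 h)).trans
          Finset.subset_union_right)
    · rw [Finset.sup_union]
      exact Finset.union_subset_union hC1.2 hC2.2
  calc rr ψ (F ∪ G) ≤ rcost ψ (C1 ∪ C2) := Finset.inf_le hmem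
    _ ≤ rcost ψ C1 + rcost ψ C2 := by
        unfold rcost
        rw [← Finset.sum_union_inter]
        exact le_add_right le_rfl
    _ = rr ψ F + rr ψ G := by rw [rr, rr, hval1, hval2]

lemma rr_empty : rr ψ ∅ = 0 := by
  refine le_antisymm ?_ zero_le
  have hmem : (∅ : Finset (Finset ℕ)) ∈ rcovers ∅ := by
    simp [rcovers]
  exact (Finset.inf_le hmem).trans_eq (by simp [rcost])

lemma Srat_rr (F : Finset ℕ) : Srat (rr ψ F) := by
  obtain ⟨C, _, hval⟩ := Finset.exists_mem_eq_inf (rcovers F) (rcovers_nonempty F) (rcost ψ)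
  rw [rr, hval]
  exact Srat_sum _ _ fun G _ => Srat_rnd _

lemma rr_le_two (F : Finset ℕ) : rr ψ F ≤ 2 * ψ (F : Set ℕ) :=
  (rr_le_rnd ψ F).trans (rnd_le _)

/-- the rationalized lsc submeasure -/
def pii (X : Set ℕ) : ℝ≥0∞ := ⨆ (F : Finset ℕ) (_ : (F : Set ℕ) ⊆ X), rr ψ F

lemma pii_mono {X Y : Set ℕ} (h : X ⊆ Y) : pii ψ X ≤ pii ψ Y :=
  iSup₂_le fun F hF => le_iSup₂_of_le F (hF.trans h) le_rfl

lemma pii_finset (hψ : IsSubmeasure ψ) (F : Finset ℕ) : pii ψ (F : Set ℕ) = rr ψ F := by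
  refine le_antisymm (iSup₂_le fun G hG => rr_mono ψ hψ (Finset.coe_subset.1 hG)) ?_
  exact le_iSup₂_of_le F subset_rfl le_rfl

lemma pii_empty : pii ψ ∅ = 0 := by
  refine le_antisymm (iSup₂_le fun F hF => ?_) zero_le
  have : F = ∅ := Finset.coe_eq_empty.1 (Set.subset_empty_iff.1 hF)
  rw [this, rr_empty]

lemma pii_subadd (X Y : Set ℕ) : pii ψ (X ∪ Y) ≤ pii ψ X + pii ψ Y := by
  classical
  refine iSup₂_le fun F hF => ?_
  set F1 : Finset ℕ := F.filter (fun k => k ∈ X) with hF1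
  set F2 : Finset ℕ := F \ F1 with hF2
  have hU : F = F1 ∪ F2 := by
    rw [hF2, Finset.union_sdiff_of_subset (Finset.filter_subset _ _)]
  have h1 : (F1 : Set ℕ) ⊆ X := fun x hx => (Finset.mem_filter.1 (by exact_mod_cast hx)).2
  have h2 : (F2 : Set ℕ) ⊆ Y := by
    intro x hx
    have hx' : x ∈ F ∧ x ∉ F1 := Finset.mem_sdiff.1 (by exact_mod_cast hx)
    have hxF : x ∈ X ∪ Y := hF (by exact_mod_cast hx'.1)
    rcases hxF with h | h
    · exact absurd (Finset.mem_filter.2 ⟨hx'.1, h⟩) hx'.2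
    · exact h
  calc rr ψ F = rr ψ (F1 ∪ F2) := by rw [← hU]
    _ ≤ rr ψ F1 + rr ψ F2 := rr_subadd ψ F1 F2
    _ ≤ pii ψ X + pii ψ Y :=
        add_le_add (le_iSup₂_of_le F1 h1 le_rfl) (le_iSup₂_of_le F2 h2 le_rfl)

lemma iSup_pii_eq (X : Set ℕ) : ⨆ n, pii ψ (X ∩ {k | k < n}) = pii ψ X := by
  refine le_antisymm (iSup_le fun n => pii_mono ψ Set.inter_subset_left) ?_
  refine iSup₂_le fun F hF => ?_
  refine le_trans ?_ (le_iSup _ (F.sup id + 1))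
  refine le_iSup₂_of_le F ?_ le_rfl
  intro x hx
  have hx' : x ∈ F := by exact_mod_cast hx
  exact ⟨hF hx, Nat.lt_succ_of_le (Finset.le_sup (f := id) hx')⟩

lemma pii_lsc (X : Set ℕ) :
    Filter.Tendsto (fun n => pii ψ (X ∩ {k | k < n})) Filter.atTop (nhds (pii ψ X)) := by
  have hmono : Monotone (fun n => pii ψ (X ∩ {k | k < n})) := fun m n hmn =>
    pii_mono ψ (Set.inter_subset_inter_right X (fun k hk => lt_of_lt_of_le hk hmn))
  have := tendsto_atTop_iSup hmono
  rwa [iSup_pii_eq ψ X] at this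

lemma psi_le_pii (hψ : IsSubmeasure ψ)
    (hlsc : ∀ X : Set ℕ, Filter.Tendsto (fun n => ψ (X ∩ {k | k < n}))
      Filter.atTop (nhds (ψ X))) (X : Set ℕ) : ψ X ≤ pii ψ X := by
  classical
  refine le_of_tendsto' (hlsc X) fun n => ?_
  set T : Finset ℕ := (Finset.range n).filter (fun k => k ∈ X) with hT
  have hTeq : (T : Set ℕ) = X ∩ {k | k < n} := by
    ext k
    simp [hT, Finset.mem_filter, Finset.mem_range, and_comm]
  rw [← hTeq]
  exact (le_rr ψ hψ T).trans (le_iSup₂_of_le T (hTeq ▸ Set.inter_subset_left) le_rfl)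

lemma pii_le_two (hψ : IsSubmeasure ψ) (X : Set ℕ) : pii ψ X ≤ 2 * ψ X :=
  iSup₂_le fun F hF => (rr_le_two ψ F).trans (mul_le_mul_right (hψ.2.1 _ _ hF) 2)

end Cover

end

/-- Every lsc submeasure can be replaced by one with the same exhaustive ideal whose
values on finite sets are rational or infinite. -/
theorem exists_rational_valued_lsc_submeasure (ψ : Set ℕ → ℝ≥0∞)
    (hψ : IsSubmeasure ψ) (hlsc : IsLSCSubmeasure ψ) :
    ∃ π : Set ℕ → ℝ≥0∞, IsSubmeasure π ∧ IsLSCSubmeasure π ∧ Exh π = Exh ψ ∧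
      ∀ F : Finset ℕ, (∃ q : ℚ, π (F : Set ℕ) = ENNReal.ofReal (q : ℝ)) ∨
        π (F : Set ℕ) = ⊤ := by
  refine ⟨pii ψ, ⟨pii_empty ψ, fun X Y h => pii_mono ψ h, pii_subadd ψ⟩, pii_lsc ψ, ?_,
    fun F => by rw [pii_finset ψ hψ]; exact Srat_rr ψ F⟩
  have hle := psi_le_pii ψ hψ hlsc
  have hle2 := pii_le_two ψ hψ
  ext X
  constructor
  · intro h ε hε
    obtain ⟨F, hF⟩ := h ε hε
    exact ⟨F, lt_of_le_of_lt (hle _) hF⟩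
  · intro h ε hε
    rcases eq_or_ne ε ⊤ with rfl | hεt
    · obtain ⟨F, hF⟩ := h 1 one_pos
      refine ⟨F, lt_of_le_of_lt (hle2 _) ?_⟩
      calc 2 * ψ (X \ (F : Set ℕ)) ≤ 2 * 1 := mul_le_mul_right hF.le 2
        _ < ⊤ := by norm_num
    · have hhalf : 0 < ε / 2 := ENNReal.div_pos hε.ne' (by norm_num)
      obtain ⟨F, hF⟩ := h (ε / 2) hhalf
      refine ⟨F, lt_of_le_of_lt (hle2 _) ?_⟩
      have h2 : 2 * ψ (X \ (F : Set ℕ)) < 2 * (ε / 2) := by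
        rw [ENNReal.mul_lt_mul_iff_right (by norm_num) (by norm_num)]
        exact hF
      rwa [ENNReal.mul_div_cancel' (by norm_num) (by norm_num)] at h2
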